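/- For every natural number N ≥ 1 and every nonzero vector c ∈ ℝ^N with nonnegative coefficients sorted in ascending order 0 ≤ c_1 ≤ c_2 ≤ … ≤ c_N, the Generalised Differential Sparsity of order 1 equals the Gini Index: S_1(c) = GI(c) = 1 − 2 · Σ_{i=1}^N (c_i / ‖c‖_1) · ((N − i + 1/2) / N). -/

import Mathlib

open Finset

/-- Generalised Differential Sparsity of order `p` (sorted coefficients). -/
noncomputable def gds (N : ℕ) (p : ℝ) (c : Fin N → ℝ) : ℝ :=
  (1 / (N * ∑ i, c i ^ p)) *
    ∑ i : Fin N, ∑ j : Fin N, if i < j then (c j - c i) ^ p else 0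

/-- The Gini Index of a vector with nonnegative coefficients sorted in ascending
order: `GI(c) = 1 − 2 Σ_{i=1}^N (c_i/‖c‖₁) · ((N − i + 1/2)/N)` (1-based indices). -/
noncomputable def giniIndex (N : ℕ) (c : Fin N → ℝ) : ℝ :=
  1 - 2 * ∑ i : Fin N, (c i / ∑ k, c k) * ((N - ((i : ℕ) + 1) + 1 / 2) / N)

theorem gds_one_eq_gini (N : ℕ) (hN : 1 ≤ N)
    (c : Fin N → ℝ) (hc0 : ∀ i, 0 ≤ c i) (hmono : Monotone c) (hne : c ≠ 0) :
    gds N 1 c = giniIndex N c := by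
  have hS : 0 < ∑ k, c k := by
    obtain ⟨i, hi⟩ := Function.ne_iff.mp hne
    exact Finset.sum_pos' (fun j _ => hc0 j)
      ⟨i, Finset.mem_univ i, lt_of_le_of_ne (hc0 i) (Ne.symm hi)⟩
  have hSne : (∑ k, c k) ≠ 0 := ne_of_gt hS
  have hNne : (N : ℝ) ≠ 0 := by positivity
  -- compute the double sum
  have key : ∑ i : Fin N, ∑ j : Fin N, (if i < j then (c j - c i) else 0)
      = ∑ k : Fin N, ((2 * (k : ℕ) + 1 : ℝ) - N) * c k := by
    have h1 : ∀ j : Fin N, (Finset.univ.filter (fun i : Fin N => i < j)) = Finset.Iio j := by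
      intro j; ext i; simp
    have h2 : ∀ i : Fin N, (Finset.univ.filter (fun j : Fin N => i < j)) = Finset.Ioi i := by
      intro i; ext j; simp
    have split : ∀ i j : Fin N, (if i < j then (c j - c i) else 0)
        = (if i < j then c j else 0) - (if i < j then c i else 0) := by
      intro i j; split <;> simp
    simp_rw [split, Finset.sum_sub_distrib]
    have hA : ∑ i : Fin N, ∑ j : Fin N, (if i < j then c j else 0)
        = ∑ k : Fin N, ((k : ℕ) : ℝ) * c k := by
      rw [Finset.sum_comm]
      refine Finset.sum_congr rfl fun j _ => ?_
      rw [← Finset.sum_filter, h1 j, Finset.sum_const, Fin.card_Iio, nsmul_eq_mul]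
    have hB : ∑ i : Fin N, ∑ j : Fin N, (if i < j then c i else 0)
        = ∑ k : Fin N, ((N : ℝ) - 1 - (k : ℕ)) * c k := by
      refine Finset.sum_congr rfl fun i _ => ?_
      rw [← Finset.sum_filter, h2 i, Finset.sum_const, Fin.card_Ioi, nsmul_eq_mul]
      congr 1
      have : (i : ℕ) ≤ N - 1 := Nat.le_sub_one_of_lt i.isLt
      push_cast [Nat.sub_sub, Nat.cast_sub (by omega : 1 + (i : ℕ) ≤ N)]
      ring
    rw [hA, hB, ← Finset.sum_sub_distrib]
    refine Finset.sum_congr rfl fun k _ => ?_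
    ring
  unfold gds giniIndex
  simp only [Real.rpow_one]
  rw [key, one_div_mul_eq_div]
  have expand : ∑ i : Fin N, (c i / ∑ k, c k) * (((N:ℝ) - ((i : ℕ) + 1) + 1 / 2) / N)
      = (∑ i : Fin N, c i * ((N:ℝ) - (i:ℕ) - 1/2)) / ((N:ℝ) * ∑ k, c k) := by
    rw [Finset.sum_div]
    refine Finset.sum_congr rfl fun i _ => ?_
    field_simp
    ring
  rw [expand]
  have hNS : (0:ℝ) < (N:ℝ) * ∑ k, c k := by positivity
  have hmain : (∑ k : Fin N, ((2 * (k : ℕ) + 1 : ℝ) - N) * c k)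
      + 2 * ∑ i : Fin N, c i * ((N:ℝ) - (i:ℕ) - 1/2) = (N:ℝ) * ∑ k, c k := by
    rw [Finset.mul_sum, ← Finset.sum_add_distrib, Finset.mul_sum]
    exact Finset.sum_congr rfl fun k _ => by ring
  rw [eq_sub_iff_add_eq, ← mul_div_assoc, ← add_div,
    div_eq_one_iff_eq hNS.ne', hmain]
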